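/- Let G be a simple graph with at least 3 vertices in which every two distinct vertices are biconnected, and let e be an edge of G with endpoints u and v. Let c be a cutvertex of G − e (the graph obtained from G by deleting e), i.e., there exist vertices a, b ≠ c that are connected in G − e but not in (G − e) − c. Then c ∉ {u, v}, and c is an internal vertex of every path from u to v in G − e. -/

import Mathlib

/-- Two vertices `a` and `b` of a simple graph `H` are *biconnected* in `H` if `a ≠ b` and
there exist two distinct paths from `a` to `b` in `H` whose only common vertices are
`a` and `b`. -/
def Biconnected {V : Type*} (H : SimpleGraph V) (a b : V) : Prop :=
  a ≠ b ∧ ∃ p q : H.Path a b, p ≠ q ∧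
    ∀ x, x ∈ p.1.support → x ∈ q.1.support → (x = a ∨ x = b)

/-- The graph obtained from `H` by deleting the vertex `c` and all edges incident to it
(keeping the same vertex type). -/
def removeVertex {V : Type*} (H : SimpleGraph V) (c : V) : SimpleGraph V where
  Adj a b := H.Adj a b ∧ a ≠ c ∧ b ≠ c
  symm := by
    refine ⟨?_⟩
    intro a b h
    exact ⟨h.1.symm, h.2.2, h.2.1⟩
  loopless := by
    refine ⟨?_⟩
    intro a h
    exact H.irrefl h.1

lemma reach_remove_of_walk {V : Type*} {H : SimpleGraph V} {c a b : V}
    (W : H.Walk a b) (hc : c ∉ W.support) : (removeVertex H c).Reachable a b := by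
  induction W with
  | nil => exact SimpleGraph.Reachable.refl _
  | @cons x y z h p ih =>
    rw [SimpleGraph.Walk.support_cons, List.mem_cons] at hc
    push_neg at hc
    have hy : y ≠ c := fun hy => hc.2 (hy ▸ p.start_mem_support)
    have hadj : (removeVertex H c).Adj x y := ⟨h, Ne.symm hc.1, hy⟩
    exact hadj.reachable.trans (ih hc.2)

lemma reach_remove_of_bi {V : Type*} {G : SimpleGraph V}
    (hbi : ∀ a b : V, a ≠ b → Biconnected G a b) {a b c : V}
    (hab : a ≠ b) (hac : a ≠ c) (hbc : b ≠ c) :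
    (removeVertex G c).Reachable a b := by
  obtain ⟨-, p, q, -, hdisj⟩ := hbi a b hab
  by_cases hp : c ∈ p.1.support
  · have hq : c ∉ q.1.support := by
      intro hq
      rcases hdisj c hp hq with h | h
      · exact hac h.symm
      · exact hbc h.symm
    exact reach_remove_of_walk q.1 hq
  · exact reach_remove_of_walk p.1 hp

lemma reach_via {V : Type*} {H H' : SimpleGraph V} {u v : V}
    (hadj : ∀ x y : V, H.Adj x y → H'.Adj x y ∨ (x = u ∧ y = v) ∨ (x = v ∧ y = u))
    (hUV : H'.Reachable u v) {a b : V} (W : H.Walk a b) : H'.Reachable a b := by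
  induction W with
  | nil => exact SimpleGraph.Reachable.refl _
  | @cons x y z h p ih =>
    refine SimpleGraph.Reachable.trans ?_ ih
    rcases hadj x y h with h' | ⟨rfl, rfl⟩ | ⟨rfl, rfl⟩
    · exact h'.reachable
    · exact hUV
    · exact hUV.symm

/-- Let `G` be a simple graph with at least 3 vertices in which every two distinct
vertices are biconnected, and let `e` be an edge of `G` with endpoints `u` and `v`.
Let `c` be a cutvertex of `G − e`. Then `c ∉ {u, v}`, and `c` is an internal vertex of
every path from `u` to `v` in `G − e`. -/
theorem cutvertex_internal_of_biconnected {V : Type*} (G : SimpleGraph V)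
    (h3 : ∃ x y z : V, x ≠ y ∧ x ≠ z ∧ y ≠ z)
    (hbi : ∀ a b : V, a ≠ b → Biconnected G a b)
    (u v : V) (he : G.Adj u v) (c : V)
    (hc : ∃ a b : V, a ≠ c ∧ b ≠ c ∧ (G.deleteEdges {s(u, v)}).Reachable a b ∧
      ¬ (removeVertex (G.deleteEdges {s(u, v)}) c).Reachable a b) :
    c ≠ u ∧ c ≠ v ∧
      ∀ P : (G.deleteEdges {s(u, v)}).Path u v,
        c ∈ P.1.support ∧ c ≠ u ∧ c ≠ v := by
  classical
  obtain ⟨a, b, hac, hbc, hreach, hn⟩ := hc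
  set G' := G.deleteEdges {s(u, v)} with hG'
  -- a ≠ b
  have hab : a ≠ b := by
    rintro rfl
    exact hn (SimpleGraph.Reachable.refl _)
  -- walk in removeVertex G c
  have hR : (removeVertex G c).Reachable a b := reach_remove_of_bi hbi hab hac hbc
  obtain ⟨W⟩ := hR
  -- the walk must use edge s(u,v)
  have hadjG' : ∀ x y : V, (removeVertex G c).Adj x y → s(x, y) ≠ s(u, v) →
      (removeVertex G' c).Adj x y := by
    intro x y h hne
    refine ⟨?_, h.2.1, h.2.2⟩
    rw [hG', SimpleGraph.deleteEdges_adj]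
    exact ⟨h.1, by simpa using hne⟩
  have hmem : s(u, v) ∈ W.edges := by
    by_contra hmem
    apply hn
    refine ⟨W.transfer (removeVertex G' c) ?_⟩
    intro e heW
    induction e with
    | h x y =>
      have hadj : (removeVertex G c).Adj x y := W.adj_of_mem_edges heW
      exact (hadjG' x y hadj (fun h => hmem (h ▸ heW)))
  have huvadj : (removeVertex G c).Adj u v := W.adj_of_mem_edges hmem
  have hcu : c ≠ u := Ne.symm huvadj.2.1
  have hcv : c ≠ v := Ne.symm huvadj.2.2
  refine ⟨hcu, hcv, fun P => ⟨?_, hcu, hcv⟩⟩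
  by_contra hcP
  -- P avoids c, gives reachability of u,v in removeVertex G' c
  have hUV : (removeVertex G' c).Reachable u v := reach_remove_of_walk P.1 hcP
  have hadjCase : ∀ x y : V, (removeVertex G c).Adj x y →
      (removeVertex G' c).Adj x y ∨ (x = u ∧ y = v) ∨ (x = v ∧ y = u) := by
    intro x y h
    by_cases hne : s(x, y) = s(u, v)
    · rw [Sym2.eq_iff] at hne
      rcases hne with ⟨rfl, rfl⟩ | ⟨rfl, rfl⟩
      · exact Or.inr (Or.inl ⟨rfl, rfl⟩)
      · exact Or.inr (Or.inr ⟨rfl, rfl⟩)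
    · exact Or.inl (hadjG' x y h hne)
  exact hn (reach_via hadjCase hUV W)
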